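/- Let M ⊂ B(H) be a von Neumann algebra and S a deterministic quantum supermap from CB(M,B(H)) to CB(N,B(K)). Then for all operators E, F, A ∈ B(H), [S(E ⊙_M AF)](I_N) = [S(EA ⊙_M F)](I_N), where (E ⊙_M F)(X) = EXF for X ∈ M. -/

import Mathlib

open scoped ComplexOrder InnerProductSpace
open Filter Topology ContinuousLinearMap

set_option synthInstance.maxHeartbeats 1000000
set_option maxHeartbeats 1000000

noncomputable section

namespace QSM

noncomputable instance piLpComplete (ι : Type*) (E : Type*) [NormedAddCommGroup E]
    [CompleteSpace E] : CompleteSpace (PiLp 2 fun _ : ι => E) :=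
  inferInstance

variable {H K : Type*}
  [NormedAddCommGroup H] [InnerProductSpace ℂ H] [CompleteSpace H]
  [NormedAddCommGroup K] [InnerProductSpace ℂ K] [CompleteSpace K]

/-- Sequential/net convergence in the weak operator topology. -/
def WOTto {E F : Type*} [NormedAddCommGroup E] [InnerProductSpace ℂ E]
    [NormedAddCommGroup F] [InnerProductSpace ℂ F]
    {ι : Type*} [Preorder ι] (T : ι → (E →L[ℂ] F)) (T' : E →L[ℂ] F) : Prop :=
  ∀ x y, Tendsto (fun n => ⟪x, T n y⟫_ℂ) atTop (𝓝 ⟪x, T' y⟫_ℂ)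

section MatOp

variable {ι : Type*} [Fintype ι] [DecidableEq ι]
variable {E F : Type*} [NormedAddCommGroup E] [InnerProductSpace ℂ E]
  [NormedAddCommGroup F] [InnerProductSpace ℂ F]

/-- The `j`-th coordinate projection on the Hilbert space direct sum. -/
def projCLM (E : Type*) [NormedAddCommGroup E] [InnerProductSpace ℂ E] (j : ι) :
    (PiLp 2 fun _ : ι => E) →L[ℂ] E :=
  (ContinuousLinearMap.proj j).comp (PiLp.continuousLinearEquiv 2 ℂ _).toContinuousLinearMap

/-- The `i`-th coordinate inclusion into the Hilbert space direct sum. -/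
def inclCLM (E : Type*) [NormedAddCommGroup E] [InnerProductSpace ℂ E] (i : ι) :
    E →L[ℂ] (PiLp 2 fun _ : ι => E) :=
  ((PiLp.continuousLinearEquiv 2 ℂ _).symm.toContinuousLinearMap).comp
    (ContinuousLinearMap.pi fun j => if j = i then ContinuousLinearMap.id ℂ E else 0)

/-- The operator on the `n`-fold Hilbert space direct sum determined by a matrix of operators.
This realizes the identification `Mₙ(B(E)) = B(Eⁿ)` used for amplifications. -/
def matOp (T : ι → ι → (E →L[ℂ] F)) : (PiLp 2 fun _ : ι => E) →L[ℂ] (PiLp 2 fun _ : ι => F) :=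
  ∑ i, ∑ j, (inclCLM F i).comp ((T i j).comp (projCLM E j))

end MatOp

variable (S : StarSubalgebra ℂ (H →L[ℂ] H))

/-- A linear map `Φ : S → B(K)` is completely positive if all of its amplifications
map positive matrices over `S` to positive operators. -/
def IsCPMap (Φ : S →ₗ[ℂ] (K →L[ℂ] K)) : Prop :=
  ∀ (n : ℕ) (a : Matrix (Fin n) (Fin n) S),
    (matOp fun i j => (a i j : H →L[ℂ] H)).IsPositive →
    (matOp fun i j => Φ (a i j)).IsPositive

/-- A linear map `Φ : S → B(K)` is completely bounded with complete bound `C` if all of its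
amplifications have norm at most `C` times the norm of the input matrix. -/
def IsCBMap (Φ : S →ₗ[ℂ] (K →L[ℂ] K)) (C : ℝ) : Prop :=
  ∀ (n : ℕ) (a : Matrix (Fin n) (Fin n) S),
    ‖matOp fun i j => Φ (a i j)‖ ≤ C * ‖matOp fun i j => (a i j : H →L[ℂ] H)‖

/-- Weak*-continuity (equivalently, for positive maps, normality) of a map `Φ : S → B(K)`:
`Φ` maps bounded weak-operator convergent sequences to weak-operator convergent sequences.
(On bounded sets of `B(H)`, `H` separable, the weak* topology coincides with the weak operator
topology and is metrizable, so sequences suffice.) -/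
def WStarCont (Φ : S →ₗ[ℂ] (K →L[ℂ] K)) : Prop :=
  ∀ (A : ℕ → S) (A' : S) (c : ℝ),
    (∀ n, ‖(A n : H →L[ℂ] H)‖ ≤ c) →
    WOTto (fun n => (A n : H →L[ℂ] H)) (A' : H →L[ℂ] H) →
    WOTto (fun n => Φ (A n)) (Φ A')

/-- A normal completely positive map. -/
def NormalCP (Φ : S →ₗ[ℂ] (K →L[ℂ] K)) : Prop :=
  IsCPMap S Φ ∧ WStarCont S Φ

/-- The cone ordering on maps: `Φ ⪯ Ψ` iff `Ψ - Φ` is a normal CP map. -/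
def CPle (Φ Ψ : S →ₗ[ℂ] (K →L[ℂ] K)) : Prop := NormalCP S (Ψ - Φ)

/-- A quantum channel into the von Neumann algebra `N`: a unital normal CP map with range in
`N`. -/
def IsChannel (N : VonNeumannAlgebra K) (Φ : S →ₗ[ℂ] (K →L[ℂ] K)) : Prop :=
  NormalCP S Φ ∧ (∀ X, Φ X ∈ N) ∧ Φ 1 = 1

/-- The elementary map `E ⊙ F : S → B(K)`, `A ↦ E A F`, for `E ∈ B(H,K)`, `F ∈ B(K,H)`. -/
def sandwichMap (L : H →L[ℂ] K) (R : K →L[ℂ] H) : S →ₗ[ℂ] (K →L[ℂ] K) where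
  toFun A := L ∘L ((A : H →L[ℂ] H) ∘L R)
  map_add' a b := by simp [add_comp, comp_add]
  map_smul' c a := by simp [smul_comp, comp_smulₛₗ]


/-- `B(H)` itself, regarded as a von Neumann algebra on `H`. -/
def topVN (H : Type*) [NormedAddCommGroup H] [InnerProductSpace ℂ H] [CompleteSpace H] :
    VonNeumannAlgebra H where
  toStarSubalgebra := ⊤
  centralizer_centralizer' := by
    show Set.centralizer (Set.centralizer ((⊤ : StarSubalgebra ℂ (H →L[ℂ] H)) : Set (H →L[ℂ] H)))
      = ((⊤ : StarSubalgebra ℂ (H →L[ℂ] H)) : Set (H →L[ℂ] H))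
    ext x
    simp only [Set.mem_centralizer_iff]
    constructor
    · intro _; simp
    · intro _ g hg
      exact (hg x (by simp)).symm

/-- The inclusion map `M ↪ B(H)` as a linear map. -/
def inclusionMap (M : VonNeumannAlgebra H) : M.toStarSubalgebra →ₗ[ℂ] (H →L[ℂ] H) where
  toFun A := (A : H →L[ℂ] H)
  map_add' _ _ := rfl
  map_smul' _ _ := rfl

theorem mem_topVN_sa {H : Type*} [NormedAddCommGroup H] [InnerProductSpace ℂ H]
    [CompleteSpace H] (a : H →L[ℂ] H) : a ∈ (topVN H).toStarSubalgebra := by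
  show a ∈ (⊤ : StarSubalgebra ℂ (H →L[ℂ] H))
  exact StarSubalgebra.mem_top

/-- The linear space of weak*-continuous completely bounded maps from `M` to `B(K)` with
values in `N`, realized (via the equality `CB = span CP` proved in the paper) as the linear
span of the normal completely positive maps from `M` into `N`. -/
def CBsp (M : VonNeumannAlgebra H) (N : VonNeumannAlgebra K) :
    Submodule ℂ (M.toStarSubalgebra →ₗ[ℂ] (K →L[ℂ] K)) :=
  Submodule.span ℂ {Φ | NormalCP M.toStarSubalgebra Φ ∧ ∀ X, Φ X ∈ N}

/-- `Eₙ ⇑ E` : the sequence `Eₙ` of normal CP maps is CP-increasing, CP-bounded by the normal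
CP map `E`, and converges pointwise to `E` in the weak operator topology (so that `E` is its
least upper bound). -/
def CPUp (E : ℕ → (S →ₗ[ℂ] (K →L[ℂ] K))) (E' : S →ₗ[ℂ] (K →L[ℂ] K)) : Prop :=
  (∀ n, NormalCP S (E n)) ∧ NormalCP S E' ∧
  (∀ n m, n ≤ m → CPle S (E n) (E m)) ∧ (∀ n, CPle S (E n) E') ∧
  ∀ X, WOTto (fun n => E n X) (E' X)

section Supermap

variable {H₁ K₁ H₂ K₂ : Type*}
  [NormedAddCommGroup H₁] [InnerProductSpace ℂ H₁] [CompleteSpace H₁]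
  [NormedAddCommGroup K₁] [InnerProductSpace ℂ K₁] [CompleteSpace K₁]
  [NormedAddCommGroup H₂] [InnerProductSpace ℂ H₂] [CompleteSpace H₂]
  [NormedAddCommGroup K₂] [InnerProductSpace ℂ K₂] [CompleteSpace K₂]
  {M₁ : VonNeumannAlgebra H₁} {N₁ : VonNeumannAlgebra K₁}
  {M₂ : VonNeumannAlgebra H₂} {N₂ : VonNeumannAlgebra K₂}

/-- Complete positivity of a supermap `Sm : CB(M₁,N₁) → CB(M₂,N₂)`: for every `n`, the
amplification `Iₙ ⊗ Sm` is positive.  Here a map `CB(M₁⁽ⁿ⁾,N₁⁽ⁿ⁾)` is encoded by its components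
`t k l i j ∈ CB(M₁,N₁)` under the identification `CB(M₁⁽ⁿ⁾,N₁⁽ⁿ⁾) = CB(Mₙ(ℂ),Mₙ(ℂ)) ⊗ CB(M₁,N₁)`,
and positivity of a map of matrix algebras means that it sends positive matrices (viewed as
operators on the direct sum via `matOp`) to positive matrices. -/
def SupCP (Sm : CBsp M₁ N₁ →ₗ[ℂ] CBsp M₂ N₂) : Prop :=
  ∀ (n : ℕ) (t : Fin n → Fin n → Fin n → Fin n → CBsp M₁ N₁),
    (∀ A : Matrix (Fin n) (Fin n) M₁.toStarSubalgebra,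
      (matOp fun i j => (A i j : H₁ →L[ℂ] H₁)).IsPositive →
      (matOp fun k l => ∑ i, ∑ j,
        ((t k l i j : M₁.toStarSubalgebra →ₗ[ℂ] (K₁ →L[ℂ] K₁)) (A i j))).IsPositive) →
    ∀ B : Matrix (Fin n) (Fin n) M₂.toStarSubalgebra,
      (matOp fun i j => (B i j : H₂ →L[ℂ] H₂)).IsPositive →
      (matOp fun k l => ∑ i, ∑ j,
        ((Sm (t k l i j) : M₂.toStarSubalgebra →ₗ[ℂ] (K₂ →L[ℂ] K₂)) (B i j))).IsPositive

/-- Normality of a supermap: `Sm` preserves least upper bounds of CP-increasing CP-bounded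
sequences. -/
def SupNormal (Sm : CBsp M₁ N₁ →ₗ[ℂ] CBsp M₂ N₂) : Prop :=
  ∀ (E : ℕ → CBsp M₁ N₁) (E' : CBsp M₁ N₁),
    CPUp M₁.toStarSubalgebra (fun n => (E n : M₁.toStarSubalgebra →ₗ[ℂ] (K₁ →L[ℂ] K₁)))
      (E' : M₁.toStarSubalgebra →ₗ[ℂ] (K₁ →L[ℂ] K₁)) →
    CPUp M₂.toStarSubalgebra (fun n => (Sm (E n) : M₂.toStarSubalgebra →ₗ[ℂ] (K₂ →L[ℂ] K₂)))
      (Sm E' : M₂.toStarSubalgebra →ₗ[ℂ] (K₂ →L[ℂ] K₂))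

/-- A quantum supermap: a linear, completely positive, normal map between spaces of
weak*-continuous completely bounded maps. -/
def IsSupermap (Sm : CBsp M₁ N₁ →ₗ[ℂ] CBsp M₂ N₂) : Prop :=
  SupCP Sm ∧ SupNormal Sm

/-- A deterministic quantum supermap: a quantum supermap mapping quantum channels to quantum
channels. -/
def IsDetSupermap (Sm : CBsp M₁ N₁ →ₗ[ℂ] CBsp M₂ N₂) : Prop :=
  IsSupermap Sm ∧
  ∀ E : CBsp M₁ N₁,
    IsChannel M₁.toStarSubalgebra N₁ (E : M₁.toStarSubalgebra →ₗ[ℂ] (K₁ →L[ℂ] K₁)) →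
    IsChannel M₂.toStarSubalgebra N₂ (Sm E : M₂.toStarSubalgebra →ₗ[ℂ] (K₂ →L[ℂ] K₂))

end Supermap

/-- The Loewner order on bounded operators. -/
def opLE {E : Type*} [NormedAddCommGroup E] [InnerProductSpace ℂ E] [CompleteSpace E]
    (a b : E →L[ℂ] E) : Prop := (b - a).IsPositive

/-- Least upper bounds for the Loewner order. -/
def opIsLUB {E : Type*} [NormedAddCommGroup E] [InnerProductSpace ℂ E] [CompleteSpace E]
    (s : Set (E →L[ℂ] E)) (a : E →L[ℂ] E) : Prop :=
  (∀ b ∈ s, opLE b a) ∧ ∀ c, (∀ b ∈ s, opLE b c) → opLE a c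

section Tensor

/-- A realization of the Hilbert space tensor product `H₁ ⊗ H₂` : a Hilbert space `G` together
with a bilinear map `t : H₁ × H₂ → G` with total range and satisfying the characteristic
inner product identity. -/
structure TensorStruct (H₁ H₂ G : Type*) [NormedAddCommGroup H₁] [InnerProductSpace ℂ H₁]
    [NormedAddCommGroup H₂] [InnerProductSpace ℂ H₂]
    [NormedAddCommGroup G] [InnerProductSpace ℂ G] : Type _ where
  t : H₁ →ₗ[ℂ] H₂ →ₗ[ℂ] G
  inner_t : ∀ x y v w, ⟪t x v, t y w⟫_ℂ = ⟪x, y⟫_ℂ * ⟪v, w⟫_ℂ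
  dense_t : Dense (↑(Submodule.span ℂ {g | ∃ x v, g = t x v}) : Set G)

variable {H₁ H₂ G : Type*}
  [NormedAddCommGroup H₁] [InnerProductSpace ℂ H₁] [CompleteSpace H₁]
  [NormedAddCommGroup H₂] [InnerProductSpace ℂ H₂] [CompleteSpace H₂]
  [NormedAddCommGroup G] [InnerProductSpace ℂ G] [CompleteSpace G]

/-- The set of elementary tensors `a ⊗ b`, `a ∈ M`, `b ∈ N`, inside `B(H₁ ⊗ H₂)`. -/
def elemT (τ : TensorStruct H₁ H₂ G) (M : VonNeumannAlgebra H₁) (N : VonNeumannAlgebra H₂) :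
    Set (G →L[ℂ] G) :=
  {c | ∃ a ∈ M, ∃ b ∈ N, ∀ x v, c (τ.t x v) = τ.t (a x) (b v)}

/-- The von Neumann algebra tensor product `M ⊗̄ N`, realized as the double commutant of the
set of elementary tensors. -/
def vnT (τ : TensorStruct H₁ H₂ G) (M : VonNeumannAlgebra H₁) (N : VonNeumannAlgebra H₂) :
    VonNeumannAlgebra G where
  toStarSubalgebra := StarSubalgebra.centralizer ℂ
    ((StarSubalgebra.centralizer ℂ (elemT τ M N) :
        StarSubalgebra ℂ (G →L[ℂ] G)) : Set (G →L[ℂ] G))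
  centralizer_centralizer' := by
    show Set.centralizer (Set.centralizer ((StarSubalgebra.centralizer ℂ
        ((StarSubalgebra.centralizer ℂ (elemT τ M N) :
          StarSubalgebra ℂ (G →L[ℂ] G)) : Set (G →L[ℂ] G))) : Set (G →L[ℂ] G)))
      = ((StarSubalgebra.centralizer ℂ
        ((StarSubalgebra.centralizer ℂ (elemT τ M N) :
          StarSubalgebra ℂ (G →L[ℂ] G)) : Set (G →L[ℂ] G))) : Set (G →L[ℂ] G))
    rw [StarSubalgebra.coe_centralizer_centralizer]
    exact Set.centralizer_centralizer_centralizer _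

end Tensor

section Amp

variable {H₁ K₁ H₂ K₂ V G G' : Type*}
  [NormedAddCommGroup H₁] [InnerProductSpace ℂ H₁] [CompleteSpace H₁]
  [NormedAddCommGroup K₁] [InnerProductSpace ℂ K₁] [CompleteSpace K₁]
  [NormedAddCommGroup H₂] [InnerProductSpace ℂ H₂] [CompleteSpace H₂]
  [NormedAddCommGroup K₂] [InnerProductSpace ℂ K₂] [CompleteSpace K₂]
  [NormedAddCommGroup V] [InnerProductSpace ℂ V] [CompleteSpace V]
  [NormedAddCommGroup G] [InnerProductSpace ℂ G] [CompleteSpace G]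
  [NormedAddCommGroup G'] [InnerProductSpace ℂ G'] [CompleteSpace G']

/-- `Ē` is the amplification `E ⊗ id_{B(V)} : M ⊗̄ B(V) → B(K₁ ⊗ V)` of the
weak*-continuous completely bounded map `E : M → B(K₁)` : it is weak*-continuous and acts in
the expected way on elementary tensors. -/
def IsAmp (M : VonNeumannAlgebra H₁) (τ : TensorStruct H₁ V G) (κ : TensorStruct K₁ V G')
    (E : M.toStarSubalgebra →ₗ[ℂ] (K₁ →L[ℂ] K₁))
    (Ebar : (vnT τ M (topVN V)).toStarSubalgebra →ₗ[ℂ] (G' →L[ℂ] G')) : Prop :=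
  WStarCont (vnT τ M (topVN V)).toStarSubalgebra Ebar ∧
  ∀ (c : (vnT τ M (topVN V)).toStarSubalgebra) (a : H₁ →L[ℂ] H₁) (ha : a ∈ M) (b : V →L[ℂ] V),
    (∀ x v, (c : G →L[ℂ] G) (τ.t x v) = τ.t (a x) (b v)) →
    ∀ x v, (Ebar c) (κ.t x v) = κ.t ((E ⟨a, ha⟩) x) (b v)

/-- The triple `(V, W, F)` (presented through concrete realizations `τ`, `κ` of the Hilbert
tensor products `H₁ ⊗ V` and `K₁ ⊗ V`) is a dilation of the supermap `Sm`, i.e.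
`[Sm(E)](A) = W* [(E ⊗ id_V)(F(A))] W` for all `E ∈ CB(M₁, B(K₁))` and `A ∈ M₂`. -/
def DilatesTo (M₁ : VonNeumannAlgebra H₁) (M₂ : VonNeumannAlgebra H₂)
    (τ : TensorStruct H₁ V G) (κ : TensorStruct K₁ V G') (W : K₂ →L[ℂ] G')
    (F : M₂.toStarSubalgebra →ₗ[ℂ] (G →L[ℂ] G)) (hF : ∀ X, F X ∈ vnT τ M₁ (topVN V))
    (Sm : CBsp M₁ (topVN K₁) →ₗ[ℂ] CBsp M₂ (topVN K₂)) : Prop :=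
  ∀ E : CBsp M₁ (topVN K₁),
    ∃ Ebar, IsAmp M₁ τ κ (E : M₁.toStarSubalgebra →ₗ[ℂ] (K₁ →L[ℂ] K₁)) Ebar ∧
      ∀ A, (Sm E : M₂.toStarSubalgebra →ₗ[ℂ] (K₂ →L[ℂ] K₂)) A
        = (ContinuousLinearMap.adjoint W) ∘L ((Ebar ⟨F A, hF A⟩) ∘L W)

/-- Minimality of a dilation: `V = span closure of {(u* ⊗ I_V) W v | u ∈ K₁, v ∈ K₂}`. -/
def MinimalDil (κ : TensorStruct K₁ V G') (W : K₂ →L[ℂ] G') : Prop :=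
  Dense (↑(Submodule.span ℂ {w : V | ∃ (u : K₁) (v : K₂) (ℓ : G' →L[ℂ] V),
    (∀ k z, ℓ (κ.t k z) = ⟪u, k⟫_ℂ • z) ∧ w = ℓ (W v)}) : Set V)

end Amp

/-- A bundled separable complex Hilbert space. -/
structure HilbertSpaceStruct : Type 1 where
  carrier : Type
  [grp : NormedAddCommGroup carrier]
  [ipc : InnerProductSpace ℂ carrier]
  [cpl : CompleteSpace carrier]
  [sep : TopologicalSpace.SeparableSpace carrier]

attribute [instance] HilbertSpaceStruct.grp HilbertSpaceStruct.ipc HilbertSpaceStruct.cpl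
  HilbertSpaceStruct.sep


set_option linter.unusedSectionVars false

section Aux

variable {ι : Type*} [Fintype ι] [DecidableEq ι]
variable {E F : Type*} [NormedAddCommGroup E] [InnerProductSpace ℂ E]
  [NormedAddCommGroup F] [InnerProductSpace ℂ F]

lemma projCLM_apply (j : ι) (x : PiLp 2 fun _ : ι => E) : projCLM E j x = x j := rfl

lemma inclCLM_apply (i : ι) (x : E) (k : ι) :
    inclCLM E i x k = if k = i then x else 0 := by
  show (ContinuousLinearMap.pi fun j => if j = i then ContinuousLinearMap.id ℂ E else 0) x k
    = if k = i then x else 0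
  rw [ContinuousLinearMap.pi_apply]
  split <;> simp_all

lemma piLp_sum_apply (s : Finset ι) (f : ι → PiLp 2 fun _ : ι => F) (k : ι) :
    (∑ i ∈ s, f i) k = ∑ i ∈ s, f i k := by
  induction s using Finset.cons_induction with
  | empty => rfl
  | cons a s ha ih => rw [Finset.sum_cons, Finset.sum_cons, ← ih]; rfl

lemma matOp_apply (T : ι → ι → (E →L[ℂ] F)) (x : PiLp 2 fun _ : ι => E) (k : ι) :
    matOp T x k = ∑ j, T k j (x j) := by
  show (∑ i, ∑ j, (inclCLM F i).comp ((T i j).comp (projCLM E j))) x k = _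
  simp only [ContinuousLinearMap.sum_apply, piLp_sum_apply,
    ContinuousLinearMap.comp_apply, inclCLM_apply, projCLM_apply]
  rw [Finset.sum_comm]
  refine Finset.sum_congr rfl (fun j _ => ?_)
  simp [Finset.sum_ite_eq]

lemma inner_matOp (T : ι → ι → (E →L[ℂ] F)) (ξ : PiLp 2 fun _ : ι => F)
    (x : PiLp 2 fun _ : ι => E) :
    ⟪ξ, matOp T x⟫_ℂ = ∑ k, ∑ j, ⟪ξ k, T k j (x j)⟫_ℂ := by
  rw [PiLp.inner_apply]
  exact Finset.sum_congr rfl fun k _ => by rw [matOp_apply, inner_sum]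

end Aux
section Pos

variable {E : Type*} [NormedAddCommGroup E] [InnerProductSpace ℂ E] [CompleteSpace E]

lemma inner_real_of_sa {B : E →L[ℂ] E} (hsa : IsSelfAdjoint B) (x : E) :
    ⟪x, B x⟫_ℂ = ((⟪x, B x⟫_ℂ).re : ℂ) := by
  have hsym := (ContinuousLinearMap.isSelfAdjoint_iff_isSymmetric.mp hsa) x x
  have : (starRingEnd ℂ) ⟪x, B x⟫_ℂ = ⟪x, B x⟫_ℂ := by
    rw [inner_conj_symm]; exact hsym
  exact (Complex.conj_eq_iff_re.mp this).symm

lemma isPositive_iff_inner (T : E →L[ℂ] E) :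
    T.IsPositive ↔ ∀ x, 0 ≤ ⟪x, T x⟫_ℂ := by
  constructor
  · rintro hT x
    rw [inner_real_of_sa hT.isSelfAdjoint x, Complex.zero_le_real]
    have := hT.inner_nonneg_right x
    simpa using (Complex.le_def.mp this).1
  · intro h
    have hsa : IsSelfAdjoint T := by
      rw [ContinuousLinearMap.isSelfAdjoint_iff_isSymmetric,
        LinearMap.isSymmetric_iff_inner_map_self_real]
      intro x
      have hx := h x
      rw [Complex.le_def] at hx
      have him : (⟪x, T x⟫_ℂ).im = 0 := by simpa using hx.2.symm
      rw [ContinuousLinearMap.coe_coe, Complex.conj_eq_iff_im]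
      have hcc : ⟪T x, x⟫_ℂ = (starRingEnd ℂ) ⟪x, T x⟫_ℂ := (inner_conj_symm _ _).symm
      have hgoal : (⟪T x, x⟫_ℂ).im = 0 := by
        rw [congrArg Complex.im hcc, Complex.conj_im, him, neg_zero]
      exact hgoal
    refine ⟨ContinuousLinearMap.isSelfAdjoint_iff_isSymmetric.mp hsa, fun x => ?_⟩
    have hx := h x
    rw [Complex.le_def] at hx
    have : ContinuousLinearMap.reApplyInnerSelf T x = (⟪x, T x⟫_ℂ).re := by
      rw [ContinuousLinearMap.reApplyInnerSelf, ← inner_re_symm]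
      rfl
    rw [this]
    simpa using hx.1

lemma isPositive_smul_real {T : E →L[ℂ] E} (hT : T.IsPositive) {c : ℝ} (hc : 0 ≤ c) :
    ((c : ℂ) • T).IsPositive := by
  rw [isPositive_iff_inner] at hT ⊢
  intro x
  rw [ContinuousLinearMap.smul_apply, inner_smul_right]
  exact mul_nonneg (by exact_mod_cast hc) (hT x)

lemma isPositive_of_sa_norm_le {B : E →L[ℂ] E} (hsa : IsSelfAdjoint B) {c : ℝ}
    (hc : ‖B‖ ≤ c) : ((c : ℂ) • 1 - B).IsPositive := by
  rw [isPositive_iff_inner]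
  intro x
  have hle : (⟪x, B x⟫_ℂ).re ≤ c * ‖x‖ ^ 2 := by
    have h1 : (⟪x, B x⟫_ℂ).re ≤ ‖⟪x, B x⟫_ℂ‖ := Complex.re_le_norm _
    have h2 : ‖⟪x, B x⟫_ℂ‖ ≤ ‖x‖ * ‖B x‖ := norm_inner_le_norm _ _
    have h3 : ‖B x‖ ≤ ‖B‖ * ‖x‖ := B.le_opNorm x
    have h4 : 0 ≤ ‖x‖ := norm_nonneg x
    nlinarith
  have heq : ⟪x, ((c : ℂ) • 1 - B) x⟫_ℂ = ((c * ‖x‖ ^ 2 : ℝ) : ℂ) - ⟪x, B x⟫_ℂ := by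
    rw [ContinuousLinearMap.sub_apply, inner_sub_right, ContinuousLinearMap.smul_apply,
      inner_smul_right, ContinuousLinearMap.one_apply, @inner_self_eq_norm_sq_to_K ℂ]
    push_cast
    ring_nf
    rfl
  rw [heq, inner_real_of_sa hsa, ← Complex.ofReal_sub, Complex.zero_le_real]
  linarith

end Pos
section MatOp2

variable {ι : Type*} [Fintype ι] [DecidableEq ι]
variable {E F : Type*} [NormedAddCommGroup E] [InnerProductSpace ℂ E]
  [NormedAddCommGroup F] [InnerProductSpace ℂ F]

lemma inner_inclCLM_matOp (T : ι → ι → (E →L[ℂ] F)) (i j : ι) (y : F) (x : E) :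
    ⟪(inclCLM F i) y, matOp T ((inclCLM E j) x)⟫_ℂ = ⟪y, T i j x⟫_ℂ := by
  rw [inner_matOp]
  have h : ∀ k l : ι, ⟪((inclCLM F i) y) k, T k l (((inclCLM E j) x) l)⟫_ℂ
      = if k = i then (if l = j then ⟪y, T k l x⟫_ℂ else 0) else 0 := by
    intro k l
    rw [inclCLM_apply, inclCLM_apply]
    split_ifs <;> simp
  simp only [h]
  simp

lemma matOp_add (T T' : ι → ι → (E →L[ℂ] F)) :
    matOp (fun i j => T i j + T' i j) = matOp T + matOp T' := by
  refine ContinuousLinearMap.ext fun x => ?_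
  refine PiLp.ext fun k => ?_
  have h0 : (matOp T + matOp T') x k = matOp T x k + matOp T' x k := rfl
  rw [h0, matOp_apply, matOp_apply, matOp_apply, ← Finset.sum_add_distrib]
  exact Finset.sum_congr rfl fun j _ => rfl

lemma matOp_smul (c : ℂ) (T : ι → ι → (E →L[ℂ] F)) :
    matOp (fun i j => c • T i j) = c • matOp T := by
  refine ContinuousLinearMap.ext fun x => ?_
  refine PiLp.ext fun k => ?_
  have h0 : (c • matOp T) x k = c • (matOp T x k) := rfl
  rw [h0, matOp_apply, matOp_apply, Finset.smul_sum]
  exact Finset.sum_congr rfl fun j _ => rfl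

variable {G : Type*} [NormedAddCommGroup G] [InnerProductSpace ℂ G] [CompleteSpace G]

lemma matOp_symm_entry {T : ι → ι → (G →L[ℂ] G)} (hsa : IsSelfAdjoint (matOp T))
    (i j : ι) (x y : G) : (starRingEnd ℂ) ⟪y, T i j x⟫_ℂ = ⟪x, T j i y⟫_ℂ := by
  have hsym := ContinuousLinearMap.isSelfAdjoint_iff_isSymmetric.mp hsa
  have h1 := hsym ((inclCLM G j) x) ((inclCLM G i) y)
  have h2 : ⟪matOp T ((inclCLM G j) x), (inclCLM G i) y⟫_ℂ
      = (starRingEnd ℂ) ⟪(inclCLM G i) y, matOp T ((inclCLM G j) x)⟫_ℂ :=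
    (inner_conj_symm _ _).symm
  have h3 : ⟪(matOp T) ((inclCLM G j) x), (inclCLM G i) y⟫_ℂ
      = ⟪(inclCLM G j) x, (matOp T) ((inclCLM G i) y)⟫_ℂ := h1
  rw [h2, inner_inclCLM_matOp, inner_inclCLM_matOp] at h3
  exact h3

lemma scalar_posSemidef {n : ℕ} {a : Fin n → Fin n → (G →L[ℂ] G)}
    (hp : (matOp a).IsPositive) (e : G) :
    Matrix.PosSemidef (Matrix.of fun i j => ⟪e, a i j e⟫_ℂ) := by
  rw [Matrix.posSemidef_iff_dotProduct_mulVec]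
  constructor
  · ext i j
    rw [Matrix.conjTranspose_apply, Matrix.of_apply, Matrix.of_apply]
    exact matOp_symm_entry hp.isSelfAdjoint j i e e
  · intro x
    have hq := (isPositive_iff_inner _).mp hp (WithLp.toLp 2 (fun i => x i • e : ∀ _ : Fin n, G) :
      PiLp 2 fun _ : Fin n => G)
    rw [inner_matOp] at hq
    simp only [PiLp.toLp_apply] at hq
    have heq : ∑ k, ∑ j, ⟪(x k • e : G), a k j (x j • e)⟫_ℂ
        = dotProduct (star x) (Matrix.mulVec (Matrix.of fun i j => ⟪e, a i j e⟫_ℂ) x) := by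
      rw [dotProduct]
      refine Finset.sum_congr rfl fun k _ => ?_
      rw [Matrix.mulVec, dotProduct]
      rw [Finset.mul_sum]
      refine Finset.sum_congr rfl fun j _ => ?_
      rw [map_smul, inner_smul_left, inner_smul_right, Matrix.of_apply]
      simp only [Pi.star_apply, RCLike.star_def]
      ring
    rw [heq] at hq
    exact hq

lemma matOp_one_isPositive :
    (matOp fun _ _ : Fin 1 => (1 : G →L[ℂ] G)).IsPositive := by
  rw [isPositive_iff_inner]
  intro ξ
  rw [inner_matOp]
  simp only [Fin.sum_univ_one, ContinuousLinearMap.one_apply]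
  rw [@inner_self_eq_norm_sq_to_K ℂ]
  positivity

end MatOp2

section CPOne

variable {H K : Type*}
  [NormedAddCommGroup H] [InnerProductSpace ℂ H] [CompleteSpace H]
  [NormedAddCommGroup K] [InnerProductSpace ℂ K] [CompleteSpace K]

lemma cp_map_one_selfAdjoint {S : StarSubalgebra ℂ (H →L[ℂ] H)}
    {Φ : S →ₗ[ℂ] (K →L[ℂ] K)} (hΦ : IsCPMap S Φ) : IsSelfAdjoint (Φ 1) := by
  have hentry : (fun i j : Fin 1 => (((fun _ _ : Fin 1 => (1 : S)) i j : S) : H →L[ℂ] H))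
      = fun _ _ : Fin 1 => (1 : H →L[ℂ] H) := by
    funext i j; simp
  have h := hΦ 1 (fun _ _ => 1) (by rw [hentry]; exact matOp_one_isPositive)
  rw [ContinuousLinearMap.isSelfAdjoint_iff_isSymmetric]
  intro x y
  have h2 := matOp_symm_entry h.isSelfAdjoint 0 0 x y
  have h3 : ⟪(Φ 1) x, y⟫_ℂ = (starRingEnd ℂ) ⟪y, (Φ 1) x⟫_ℂ := (inner_conj_symm _ _).symm
  exact h3.trans h2

end CPOne
section Omega

variable {H K : Type*}
  [NormedAddCommGroup H] [InnerProductSpace ℂ H] [CompleteSpace H]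
  [NormedAddCommGroup K] [InnerProductSpace ℂ K] [CompleteSpace K]
variable (S : StarSubalgebra ℂ (H →L[ℂ] H))

/-- `B ↦ (a ↦ ⟪e, a e⟫ • B)` : the "measure-and-prepare" maps built from the vector state at
`e` with output `B`, as a linear map in `B`. -/
def omegaR (e : H) : (K →L[ℂ] K) →ₗ[ℂ] (S →ₗ[ℂ] (K →L[ℂ] K)) where
  toFun B :=
    { toFun := fun a => ⟪e, (a : H →L[ℂ] H) e⟫_ℂ • B
      map_add' := fun a b => by
        simp only [AddMemClass.coe_add, ContinuousLinearMap.add_apply, inner_add_right, add_smul]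
      map_smul' := fun c a => by
        simp only [SetLike.val_smul, ContinuousLinearMap.smul_apply, inner_smul_right,
          RingHom.id_apply, smul_smul] }
  map_add' B C := LinearMap.ext fun a => smul_add _ B C
  map_smul' c B := LinearMap.ext fun a => smul_comm _ c B

lemma omegaR_apply (e : H) (B : K →L[ℂ] K) (a : S) :
    omegaR S e B a = ⟪e, (a : H →L[ℂ] H) e⟫_ℂ • B := rfl

lemma omega_wstarCont (e : H) (B : K →L[ℂ] K) : WStarCont S (omegaR S e B) := by
  intro A A' c _ hWOT x y
  simp only [omegaR_apply, ContinuousLinearMap.smul_apply, inner_smul_right]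
  exact (hWOT e e).mul_const _

lemma omega_isCPMap (e : H) {B : K →L[ℂ] K} (hB : B.IsPositive) :
    IsCPMap S (omegaR S e B) := by
  intro n a hpos
  rw [isPositive_iff_inner]
  intro ξ
  rw [inner_matOp]
  obtain ⟨C, hC⟩ : ∃ C : Matrix (Fin n) (Fin n) ℂ,
      (Matrix.of fun i j => ⟪e, ((a i j : S) : H →L[ℂ] H) e⟫_ℂ) = C.conjTranspose * C := by
    letI := Matrix.instCStarAlgebra (n := Fin n)
    open scoped MatrixOrder in
    obtain ⟨C, hC⟩ := CStarAlgebra.nonneg_iff_eq_star_mul_self.mp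
      (scalar_posSemidef hpos e).nonneg
    exact ⟨C, hC⟩
  have e1 : ∀ k j, ⟪ξ k, (omegaR S e B (a k j)) (ξ j)⟫_ℂ
      = ∑ m, (starRingEnd ℂ) (C m k) * C m j * ⟪ξ k, B (ξ j)⟫_ℂ := by
    intro k j
    rw [omegaR_apply, ContinuousLinearMap.smul_apply, inner_smul_right]
    have hA : ⟪e, ((a k j : H →L[ℂ] H)) e⟫_ℂ = ∑ m, (starRingEnd ℂ) (C m k) * C m j := by
      have h2 := congrFun (congrFun hC k) j
      rw [Matrix.of_apply] at h2
      rw [h2, Matrix.mul_apply]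
      exact Finset.sum_congr rfl fun m _ => by rw [Matrix.conjTranspose_apply, RCLike.star_def]
    rw [hA, Finset.sum_mul]
  have e2 : ∀ m, ⟪∑ k, C m k • ξ k, B (∑ j, C m j • ξ j)⟫_ℂ
      = ∑ k, ∑ j, (starRingEnd ℂ) (C m k) * C m j * ⟪ξ k, B (ξ j)⟫_ℂ := by
    intro m
    rw [map_sum, sum_inner]
    refine Finset.sum_congr rfl fun k _ => ?_
    rw [inner_sum]
    refine Finset.sum_congr rfl fun j _ => ?_
    rw [map_smul, inner_smul_left, inner_smul_right]
    ring
  calc (0:ℂ) ≤ ∑ m, ⟪∑ k, C m k • ξ k, B (∑ j, C m j • ξ j)⟫_ℂ :=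
        Finset.sum_nonneg fun m _ => (isPositive_iff_inner B).mp hB _
    _ = ∑ m, ∑ k, ∑ j, (starRingEnd ℂ) (C m k) * C m j * ⟪ξ k, B (ξ j)⟫_ℂ :=
        Finset.sum_congr rfl fun m _ => e2 m
    _ = ∑ k, ∑ j, ∑ m, (starRingEnd ℂ) (C m k) * C m j * ⟪ξ k, B (ξ j)⟫_ℂ := by
        rw [Finset.sum_comm]
        exact Finset.sum_congr rfl fun k _ => Finset.sum_comm
    _ = ∑ k, ∑ j, ⟪ξ k, (omegaR S e B (a k j)) (ξ j)⟫_ℂ :=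
        Finset.sum_congr rfl fun k _ => Finset.sum_congr rfl fun j _ => (e1 k j).symm

lemma omega_normalCP (e : H) {B : K →L[ℂ] K} (hB : B.IsPositive) :
    NormalCP S (omegaR S e B) :=
  ⟨omega_isCPMap S e hB, omega_wstarCont S e B⟩

end Omega

section NCPAlg

variable {H K : Type*}
  [NormedAddCommGroup H] [InnerProductSpace ℂ H] [CompleteSpace H]
  [NormedAddCommGroup K] [InnerProductSpace ℂ K] [CompleteSpace K]
variable {S : StarSubalgebra ℂ (H →L[ℂ] H)}

lemma NormalCP.add' {Φ Ψ : S →ₗ[ℂ] (K →L[ℂ] K)} (hΦ : NormalCP S Φ) (hΨ : NormalCP S Ψ) :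
    NormalCP S (Φ + Ψ) := by
  constructor
  · intro n a hpos
    have h : (fun i j => (Φ + Ψ) (a i j)) = fun i j => Φ (a i j) + Ψ (a i j) := rfl
    rw [h, matOp_add]
    exact (hΦ.1 n a hpos).add (hΨ.1 n a hpos)
  · intro A A' c hc hW x y
    simp only [LinearMap.add_apply, ContinuousLinearMap.add_apply, inner_add_right]
    exact (hΦ.2 A A' c hc hW x y).add (hΨ.2 A A' c hc hW x y)

lemma NormalCP.smul_real {Φ : S →ₗ[ℂ] (K →L[ℂ] K)} (hΦ : NormalCP S Φ) {r : ℝ} (hr : 0 ≤ r) :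
    NormalCP S ((r : ℂ) • Φ) := by
  constructor
  · intro n a hpos
    have h : (fun i j => ((r : ℂ) • Φ) (a i j)) = fun i j => (r : ℂ) • (Φ (a i j)) := rfl
    rw [h, matOp_smul]
    exact isPositive_smul_real (hΦ.1 n a hpos) hr
  · intro A A' c hc hW x y
    simp only [LinearMap.smul_apply, ContinuousLinearMap.smul_apply, inner_smul_right]
    exact ((hΦ.2 A A' c hc hW x y).const_mul _)

end NCPAlg
section OmegaMem

variable {H K : Type*}
  [NormedAddCommGroup H] [InnerProductSpace ℂ H] [CompleteSpace H]
  [NormedAddCommGroup K] [InnerProductSpace ℂ K] [CompleteSpace K]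
variable (M : VonNeumannAlgebra H)

lemma omega_mem_CBsp_of_pos (e : H) {B : K →L[ℂ] K} (hB : B.IsPositive) :
    omegaR M.toStarSubalgebra e B ∈ CBsp M (topVN K) :=
  Submodule.subset_span ⟨omega_normalCP _ e hB, fun _ => mem_topVN_sa _⟩

lemma omega_mem_CBsp_of_sa (e : H) {B : K →L[ℂ] K} (hB : IsSelfAdjoint B) :
    omegaR M.toStarSubalgebra e B ∈ CBsp M (topVN K) := by
  have h1 : B = (‖B‖ : ℂ) • 1 - ((‖B‖ : ℂ) • 1 - B) := by rw [sub_sub_cancel]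
  rw [h1, map_sub]
  exact sub_mem
    (omega_mem_CBsp_of_pos M e
      (isPositive_smul_real ContinuousLinearMap.isPositive_one (norm_nonneg B)))
    (omega_mem_CBsp_of_pos M e (isPositive_of_sa_norm_le hB le_rfl))

lemma omega_mem_CBsp (e : H) (B : K →L[ℂ] K) :
    omegaR M.toStarSubalgebra e B ∈ CBsp M (topVN K) := by
  have hC : IsSelfAdjoint (B + star B) := by
    rw [IsSelfAdjoint, star_add, star_star, add_comm]
  have hD : IsSelfAdjoint (Complex.I • (star B - B)) := by
    rw [IsSelfAdjoint, star_smul, star_sub, star_star, Complex.star_def, Complex.conj_I,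
      neg_smul, ← smul_neg, neg_sub]
  have hBeq : B = (2:ℂ)⁻¹ • ((B + star B) + Complex.I • (Complex.I • (star B - B))) := by
    rw [smul_smul, Complex.I_mul_I, neg_one_smul]
    module
  have key : omegaR M.toStarSubalgebra e B
      = (2:ℂ)⁻¹ • (omegaR M.toStarSubalgebra e (B + star B)
          + Complex.I • omegaR M.toStarSubalgebra e (Complex.I • (star B - B))) := by
    rw [← map_smul, ← map_add, ← map_smul, ← hBeq]
  rw [key]
  exact Submodule.smul_mem _ _ (Submodule.add_mem _ (omega_mem_CBsp_of_sa M e hC)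
    (Submodule.smul_mem _ _ (omega_mem_CBsp_of_sa M e hD)))

lemma omega_apply_one (S : StarSubalgebra ℂ (H →L[ℂ] H)) {e : H} (he : ‖e‖ = 1)
    (B : K →L[ℂ] K) : omegaR S e B 1 = B := by
  rw [omegaR_apply]
  have h1 : ((1 : S) : H →L[ℂ] H) = 1 := rfl
  rw [h1, ContinuousLinearMap.one_apply, @inner_self_eq_norm_sq_to_K ℂ, he]
  norm_num

end OmegaMem
set_option maxHeartbeats 4000000

/-- If `S` is a deterministic quantum supermap from `CB(M,B(H))` to
`CB(N,B(K))`, then for all operators `E, F, A ∈ B(H)`,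
`[S(E ⊙ AF)](I_N) = [S(EA ⊙ F)](I_N)`. -/
theorem statement10 {H K : Type*} [NormedAddCommGroup H] [InnerProductSpace ℂ H] [CompleteSpace H] [TopologicalSpace.SeparableSpace H] [NormedAddCommGroup K] [InnerProductSpace ℂ K] [CompleteSpace K] [TopologicalSpace.SeparableSpace K]
    (M : VonNeumannAlgebra H) (N : VonNeumannAlgebra K)
    (Sm : CBsp M (topVN H) →ₗ[ℂ] CBsp N (topVN K)) (hS : IsDetSupermap Sm)
    (E F A : H →L[ℂ] H) (X Y : CBsp M (topVN H))
    (hX : (X : M.toStarSubalgebra →ₗ[ℂ] (H →L[ℂ] H))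
        = sandwichMap M.toStarSubalgebra E (A ∘L F))
    (hY : (Y : M.toStarSubalgebra →ₗ[ℂ] (H →L[ℂ] H))
        = sandwichMap M.toStarSubalgebra (E ∘L A) F) :
    (Sm X : N.toStarSubalgebra →ₗ[ℂ] (K →L[ℂ] K)) 1
      = (Sm Y : N.toStarSubalgebra →ₗ[ℂ] (K →L[ℂ] K)) 1 := by
  obtain htriv | hnt := subsingleton_or_nontrivial H
  · have hsub : Subsingleton (H →L[ℂ] H) :=
      ⟨fun f g => ContinuousLinearMap.ext fun x => Subsingleton.elim _ _⟩
    have hXY : X = Y := Subtype.ext (by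
      rw [hX, hY]; exact LinearMap.ext fun a => Subsingleton.elim _ _)
    rw [hXY]
  · obtain ⟨v, hv⟩ := exists_ne (0 : H)
    have hvn : ‖v‖ ≠ 0 := norm_ne_zero_iff.mpr hv
    set e : H := ‖v‖⁻¹ • v with he_def
    have he : ‖e‖ = 1 := by
      rw [he_def, norm_smul, norm_inv, norm_norm, inv_mul_cancel₀ hvn]
    let L1 : CBsp M (topVN H) →ₗ[ℂ] (K →L[ℂ] K) :=
      (LinearMap.applyₗ (1 : N.toStarSubalgebra)).comp ((CBsp N (topVN K)).subtype.comp Sm)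
    let omegaCB : (H →L[ℂ] H) →ₗ[ℂ] CBsp M (topVN H) :=
      LinearMap.codRestrict _ (omegaR M.toStarSubalgebra e) (omega_mem_CBsp M e)
    have key0 : ∀ (x : M.toStarSubalgebra →ₗ[ℂ] (H →L[ℂ] H))
        (hx : x ∈ Submodule.span ℂ {Φ : M.toStarSubalgebra →ₗ[ℂ] (H →L[ℂ] H) |
          NormalCP M.toStarSubalgebra Φ ∧ ∀ X, Φ X ∈ topVN H}),
        ∀ (hx' : x ∈ CBsp M (topVN H)), L1 ⟨x, hx'⟩ = L1 (omegaCB (x 1)) := by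
      intro x hx
      induction hx using Submodule.span_induction with
      | mem Φ hΦ =>
        intro hx'
        have hNCP := hΦ.1
        set B₀ : H →L[ℂ] H := Φ 1 with hB₀
        have hB₀sa : IsSelfAdjoint B₀ := cp_map_one_selfAdjoint hNCP.1
        set c : ℝ := ‖B₀‖ + 1 with hcdef
        have hc0 : (0:ℝ) < c := by rw [hcdef]; positivity
        have hcne : (c : ℂ) ≠ 0 := by exact_mod_cast hc0.ne'
        have hBpos : ((c : ℂ) • 1 - B₀).IsPositive :=
          isPositive_of_sa_norm_le hB₀sa (by rw [hcdef]; linarith)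
        let ΦC : CBsp M (topVN H) := ⟨Φ, hx'⟩
        let ΨC : CBsp M (topVN H) :=
          ⟨omegaR M.toStarSubalgebra e ((c : ℂ) • 1 - B₀), omega_mem_CBsp M e _⟩
        let ΘC : CBsp M (topVN H) := (c : ℂ)⁻¹ • (ΦC + ΨC)
        let ΩC : CBsp M (topVN H) := ⟨omegaR M.toStarSubalgebra e 1, omega_mem_CBsp M e 1⟩
        have hΘcoe : (ΘC : M.toStarSubalgebra →ₗ[ℂ] (H →L[ℂ] H))
            = (c : ℂ)⁻¹ • (Φ + omegaR M.toStarSubalgebra e ((c : ℂ) • 1 - B₀)) := rfl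
        have hΘch : IsChannel M.toStarSubalgebra (topVN H)
            (ΘC : M.toStarSubalgebra →ₗ[ℂ] (H →L[ℂ] H)) := by
          rw [hΘcoe]
          refine ⟨?_, fun X => mem_topVN_sa _, ?_⟩
          · have hsum := (hNCP.add' (omega_normalCP _ e hBpos)).smul_real
              (r := c⁻¹) (inv_nonneg.mpr hc0.le)
            rwa [Complex.ofReal_inv] at hsum
          · rw [LinearMap.smul_apply, LinearMap.add_apply, omega_apply_one _ he, ← hB₀,
              add_sub_cancel, smul_smul, inv_mul_cancel₀ hcne, one_smul]
        have hΩch : IsChannel M.toStarSubalgebra (topVN H)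
            (ΩC : M.toStarSubalgebra →ₗ[ℂ] (H →L[ℂ] H)) :=
          ⟨omega_normalCP _ e ContinuousLinearMap.isPositive_one, fun X => mem_topVN_sa _,
            omega_apply_one _ he 1⟩
        have h1 : L1 ΘC = 1 := (hS.2 ΘC hΘch).2.2
        have h2 : L1 ΩC = 1 := (hS.2 ΩC hΩch).2.2
        have hΨ : ΨC = (c : ℂ) • ΩC - omegaCB B₀ := Subtype.ext (by
          show omegaR M.toStarSubalgebra e ((c : ℂ) • 1 - B₀)
            = (c : ℂ) • omegaR M.toStarSubalgebra e 1 - omegaR M.toStarSubalgebra e B₀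
          rw [map_sub, map_smul])
        have hLΨ : L1 ΨC = (c : ℂ) • L1 ΩC - L1 (omegaCB B₀) := by
          rw [hΨ]
          rw [map_sub L1 ((c : ℂ) • ΩC) (omegaCB B₀), map_smul L1]
        have h3 : L1 ΘC = (c : ℂ)⁻¹ • (L1 ΦC + ((c : ℂ) • L1 ΩC - L1 (omegaCB B₀))) := by
          have hθ : ΘC = (c : ℂ)⁻¹ • (ΦC + ΨC) := rfl
          rw [hθ, map_smul, map_add, hLΨ]
        rw [h1, h2] at h3
        have h4 : L1 ΦC + ((c : ℂ) • 1 - L1 (omegaCB B₀)) = (c : ℂ) • 1 := by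
          calc L1 ΦC + ((c : ℂ) • 1 - L1 (omegaCB B₀))
              = (c : ℂ) • ((c : ℂ)⁻¹ • (L1 ΦC + ((c : ℂ) • 1 - L1 (omegaCB B₀)))) := by
                rw [smul_smul, mul_inv_cancel₀ hcne, one_smul]
            _ = (c : ℂ) • 1 := by rw [← h3]
        have h5 : L1 ΦC = L1 (omegaCB B₀) := by
          have h6 := eq_sub_of_add_eq h4
          rwa [sub_sub_cancel] at h6
        exact h5
      | zero =>
        intro hx'
        have hz : (⟨0, hx'⟩ : ↥(CBsp M (topVN H))) = 0 := Subtype.ext rfl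
        rw [hz]
        simp only [LinearMap.zero_apply, map_zero]
      | add x y hxm hym ihx ihy =>
        intro hx'
        have hxc : x ∈ CBsp M (topVN H) := hxm
        have hyc : y ∈ CBsp M (topVN H) := hym
        have hz : (⟨x + y, hx'⟩ : ↥(CBsp M (topVN H))) = ⟨x, hxc⟩ + ⟨y, hyc⟩ :=
          Subtype.ext rfl
        have hz2 : (x + y) 1 = x 1 + y 1 := rfl
        rw [hz, hz2, map_add L1, ihx hxc, ihy hyc, map_add, map_add]
      | smul a x hxm ih =>
        intro hx'
        have hxc : x ∈ CBsp M (topVN H) := hxm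
        have hz : (⟨a • x, hx'⟩ : ↥(CBsp M (topVN H))) = a • (⟨x, hxc⟩ : ↥(CBsp M (topVN H))) :=
          Subtype.ext rfl
        have hz2 : (a • x) 1 = a • (x 1) := rfl
        rw [hz, hz2, map_smul L1, ih hxc, map_smul, map_smul]
    have hX1Y1 : (X : M.toStarSubalgebra →ₗ[ℂ] (H →L[ℂ] H)) 1
        = (Y : M.toStarSubalgebra →ₗ[ℂ] (H →L[ℂ] H)) 1 := by
      rw [hX, hY]
      show E ∘L ((((1 : M.toStarSubalgebra) : H →L[ℂ] H)) ∘L (A ∘L F))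
          = (E ∘L A) ∘L ((((1 : M.toStarSubalgebra) : H →L[ℂ] H)) ∘L F)
      have h1 : ((1 : M.toStarSubalgebra) : H →L[ℂ] H) = 1 := rfl
      rw [h1]
      simp [ContinuousLinearMap.one_def, ContinuousLinearMap.comp_assoc]
    have hfin1 := key0 X.1 X.2 X.2
    have hfin2 := key0 Y.1 Y.2 Y.2
    show L1 X = L1 Y
    calc L1 X = L1 (omegaCB ((X : M.toStarSubalgebra →ₗ[ℂ] (H →L[ℂ] H)) 1)) := hfin1
      _ = L1 (omegaCB ((Y : M.toStarSubalgebra →ₗ[ℂ] (H →L[ℂ] H)) 1)) := by rw [hX1Y1]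
      _ = L1 Y := hfin2.symm

end QSM
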